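/- Let R be a commutative ring, a : ℕ → R with a_0 a unit of R, and S = ∑_{i≥0} a_i X^i ∈ R⟦X⟧. Define b_0 = a_0^{-1} and, for n ≥ 1, b_n = (-1)^n a_0^{-(n+1)} · det T_n, where T_n is the n×n matrix whose (i,j) entry (1-indexed) is a_{j-i+1} if i ≤ j, is a_0 if i = j+1, and is 0 if i > j+1. Then S · (∑_{n≥0} b_n X^n) = 1 in R⟦X⟧, i.e. ∑_{n≥0} b_n X^n is the multiplicative inverse of S. -/
import Mathlib

open Finset PowerSeries

private def Mm {R : Type*} [CommRing R] (a : ℕ → R) (s n : ℕ) :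
    Matrix (Fin n) (Fin n) R :=
  Matrix.of fun i j =>
    if (i : ℕ) = 0 then a ((j : ℕ) + s)
    else if (i : ℕ) ≤ (j : ℕ) then a ((j : ℕ) - (i : ℕ) + 1)
    else if (i : ℕ) = (j : ℕ) + 1 then a 0 else 0

private lemma Mm_det_one {R : Type*} [CommRing R] (a : ℕ → R) (s : ℕ) :
    (Mm a s 1).det = a s := by
  rw [Matrix.det_fin_one]
  simp [Mm]

private lemma Mm_sub0 {R : Type*} [CommRing R] (a : ℕ → R) (s n : ℕ) :
    (Mm a s (n+2)).submatrix (Fin.succAbove 0) Fin.succ = Mm a 1 (n+1) := by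
  ext i j
  simp only [Matrix.submatrix_apply, Fin.succAbove_zero, Mm, Matrix.of_apply,
    Fin.val_succ]
  split_ifs <;> first | rfl | (congr 1; omega) | (exfalso; omega) | exact False.elim ‹False›

private lemma Mm_sub1 {R : Type*} [CommRing R] (a : ℕ → R) (s n : ℕ) :
    (Mm a s (n+2)).submatrix ((1 : Fin (n+2)).succAbove) Fin.succ
      = Mm a (s+1) (n+1) := by
  ext i j
  induction i using Fin.cases with
  | zero =>
      have h0 : ((1 : Fin (n+2)).succAbove 0) = 0 := by
        rw [Fin.succAbove_of_castSucc_lt]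
        · rfl
        · simp [Fin.lt_def]
      simp only [Matrix.submatrix_apply, h0, Mm, Matrix.of_apply, Fin.val_zero,
        Fin.val_succ]
      split_ifs <;> first | rfl | (congr 1; omega) | (exfalso; omega) | exact False.elim ‹False›
  | succ i =>
      have h0 : ((1 : Fin (n+2)).succAbove i.succ) = i.succ.succ := by
        rw [Fin.succAbove_of_le_castSucc]
        rw [Fin.le_def]
        simp
      simp only [Matrix.submatrix_apply, h0, Mm, Matrix.of_apply, Fin.val_succ]
      split_ifs <;> first | rfl | (congr 1; omega) | (exfalso; omega) | exact False.elim ‹False›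

private lemma Mm_det_rec {R : Type*} [CommRing R] (a : ℕ → R) (s n : ℕ) :
    (Mm a s (n+2)).det =
      a s * (Mm a 1 (n+1)).det - a 0 * (Mm a (s+1) (n+1)).det := by
  rw [show (n+2) = (n+1).succ from rfl, Matrix.det_succ_column_zero]
  rw [Fin.sum_univ_succ, Fin.sum_univ_succ]
  have hz : ∀ i : Fin n, (Mm a s (n+2)) i.succ.succ 0 = 0 := by
    intro i
    simp only [Mm, Matrix.of_apply, Fin.val_succ, Fin.val_zero]
    have h1 : ¬ ((i:ℕ)+1+1 = 0) := by omega
    have h2 : ¬ ((i:ℕ)+1+1 ≤ 0) := by omega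
    have h3 : ¬ ((i:ℕ)+1+1 = 0+1) := by omega
    simp [h1, h2, h3]
  have hsum0 : (∑ i : Fin n, (-1:R) ^ ((i.succ.succ : Fin (n+2)) : ℕ) *
      (Mm a s (n+2)) i.succ.succ 0 *
      ((Mm a s (n+2)).submatrix i.succ.succ.succAbove Fin.succ).det) = 0 := by
    apply Finset.sum_eq_zero
    intro i _
    rw [hz i]
    ring
  rw [hsum0, show (Fin.succ (0 : Fin (n+1))) = (1 : Fin (n+2)) from rfl]
  rw [show ((0 : Fin (n+2)).succAbove) = Fin.succAbove 0 from rfl]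
  rw [Mm_sub0, Mm_sub1]
  have e0 : (Mm a s (n+2)) 0 0 = a s := by simp [Mm]
  have e1 : (Mm a s (n+2)) 1 0 = a 0 := by simp [Mm]
  rw [e0, e1]
  simp only [Fin.val_zero, Fin.val_one, pow_zero, pow_one]
  ring

private lemma Mm_det_formula {R : Type*} [CommRing R] (a : ℕ → R) :
    ∀ n s : ℕ, (Mm a s (n+1)).det =
      ∑ k ∈ Finset.range (n+1),
        (-1:R)^k * a 0 ^ k * a (s+k) * (Mm a 1 (n-k)).det := by
  intro n
  induction n with
  | zero =>
      intro s
      simp [Mm, Mm_det_one, Matrix.det_fin_zero]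
  | succ n ih =>
      intro s
      rw [Mm_det_rec, ih (s+1)]
      conv_rhs => rw [Finset.sum_range_succ']
      have hcg : ∀ k ∈ Finset.range (n+1),
          (-1:R)^(k+1) * a 0 ^ (k+1) * a (s+(k+1)) * (Mm a 1 (n+1-(k+1))).det
          = -(a 0 * ((-1:R)^k * a 0 ^ k * a (s+1+k) * (Mm a 1 (n-k)).det)) := by
        intro k hk
        rw [show n+1-(k+1) = n-k from by omega, show s+(k+1) = s+1+k from by omega]
        ring
      rw [Finset.sum_congr rfl hcg, Finset.sum_neg_distrib, ← Finset.mul_sum]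
      simp only [pow_zero, one_mul, Nat.add_zero, Nat.sub_zero]
      ring

theorem inverse_powerSeries_det {R : Type*} [CommRing R] (a : ℕ → R) (u : Rˣ)
    (hu : (u : R) = a 0) (b : ℕ → R)
    (hb0 : b 0 = (↑u⁻¹ : R))
    (hb : ∀ n : ℕ, 1 ≤ n → b n =
      (-1 : R) ^ n * (↑u⁻¹ : R) ^ (n + 1) *
        Matrix.det (Matrix.of fun i j : Fin n =>
          if (i : ℕ) ≤ (j : ℕ) then a ((j : ℕ) - (i : ℕ) + 1)
          else if (i : ℕ) = (j : ℕ) + 1 then a 0 else 0)) :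
    PowerSeries.mk a * PowerSeries.mk b = 1 := by
  set v : R := (↑u⁻¹ : R) with hv
  have huv : a 0 * v = 1 := by rw [← hu, hv]; exact_mod_cast u.mul_inv
  have hvu : v * a 0 = 1 := by rw [mul_comm]; exact huv
  have hbn : ∀ n : ℕ, b n = (-1:R)^n * v^(n+1) * (Mm a 1 n).det := by
    intro n
    match n with
    | 0 => simp [hb0, Matrix.det_fin_zero, hv]
    | (m+1) =>
      rw [hb (m+1) (by omega)]
      congr 2
      ext i j
      simp only [Mm, Matrix.of_apply]
      split_ifs <;> first | rfl | (congr 1; omega) | (exfalso; omega) | exact False.elim ‹False›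
  ext n
  rw [PowerSeries.coeff_mul]
  simp only [PowerSeries.coeff_mk]
  rw [Finset.Nat.sum_antidiagonal_eq_sum_range_succ_mk]
  match n with
  | 0 =>
      rw [Finset.sum_range_one, Nat.sub_zero, hb0, ← hu,
        PowerSeries.coeff_one, if_pos rfl]
      exact_mod_cast u.mul_inv
  | (n+1) =>
      rw [PowerSeries.coeff_one, if_neg (by omega)]
      rw [Finset.sum_range_succ']
      have key : ∀ k ∈ Finset.range (n+1),
          a (k+1) * b (n+1-(k+1))
          = -((-1:R)^(n+1) * v^(n+1) *
              ((-1:R)^k * a 0 ^ k * a (1+k) * (Mm a 1 (n-k)).det)) := by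
        intro k hk
        rw [Finset.mem_range] at hk
        rw [show n+1-(k+1) = n-k from by omega, hbn (n-k),
          show 1+k = k+1 from by omega]
        have hpow : v^(n+1) * a 0 ^ k = v^(n-k+1) := by
          have h : v^(n+1) = v^(n-k+1) * v^k := by
            rw [← pow_add]; congr 1; omega
          rw [h, mul_assoc, ← mul_pow, hvu, one_pow, mul_one]
        have hsgn : (-1:R)^(n+1) * (-1:R)^k = -(-1:R)^(n-k) := by
          have h1 : (-1:R)^(n+1) * (-1:R)^k = (-1:R)^(n+k+1) := by
            rw [← pow_add]; congr 1; omega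
          have h2 : (n+k+1) = (n-k) + (2*k+1) := by omega
          rw [h1, h2, pow_add, pow_add, pow_mul]
          norm_num
        calc a (k+1) * ((-1:R)^(n-k) * v^(n-k+1) * (Mm a 1 (n-k)).det)
            = ((-1:R)^(n-k)) * (v^(n-k+1)) * (a (k+1) * (Mm a 1 (n-k)).det) := by
              ring
          _ = -((-1:R)^(n+1) * v^(n+1) *
              ((-1:R)^k * a 0 ^ k * a (k+1) * (Mm a 1 (n-k)).det)) := by
              rw [← hpow, ← neg_neg ((-1:R)^(n-k)), ← hsgn]
              ring
      rw [Finset.sum_congr rfl key, Finset.sum_neg_distrib, ← Finset.mul_sum,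
        ← Mm_det_formula a n 1]
      rw [Nat.sub_zero, hbn (n+1)]
      rw [show v^(n+1+1) = v^(n+1) * v from pow_succ v (n+1)]
      calc -((-1:R)^(n+1) * v^(n+1) * (Mm a 1 (n+1)).det) +
            a 0 * ((-1:R)^(n+1) * (v^(n+1) * v) * (Mm a 1 (n+1)).det)
          = -((-1:R)^(n+1) * v^(n+1) * (Mm a 1 (n+1)).det) +
            (a 0 * v) * ((-1:R)^(n+1) * v^(n+1) * (Mm a 1 (n+1)).det) := by ring
        _ = 0 := by rw [huv, one_mul]; ring
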